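/- On the open book S with metric ρ as above, let Q be a probability measure with finite Fréchet function, and write a point of H as (x⁰, x_{1D}) with x_{1D} ∈ ℝ^D. Then the Fréchet function of Q at a point (k; x⁰, x_{1D}) decomposes as F(k; x⁰, x_{1D}) = G_k(x⁰) + ∫ ‖x_{1D} − z_{1D}‖² Q̃(dz) where Q̃ is the pushforward of Q to H under the projection π(k;x) = x, and G_k(x⁰) = ∫_H (x⁰ − z⁰)² Q_k(dz) + Σ_{k'≠k} ∫_H (x⁰ + z⁰)² Q_{k'}(dz). Consequently, the last D coordinates of any Fréchet mean of Q equal the Euclidean mean μ_{1D} = ∫ z_{1D} Q̃(dz). -/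

import Mathlib

open MeasureTheory

/-- The open-book distance on `K` copies of the half-space `H = [0,∞) × ℝ^D`. -/
noncomputable def obDist {K D : ℕ} (p q : Fin K × ℝ × EuclideanSpace ℝ (Fin D)) : ℝ :=
  Real.sqrt ((if p.1 = q.1 then (p.2.1 - q.2.1) ^ 2 else (p.2.1 + q.2.1) ^ 2)
    + ‖p.2.2 - q.2.2‖ ^ 2)

lemma obDist_sq {K D : ℕ} (p q : Fin K × ℝ × EuclideanSpace ℝ (Fin D)) :
    obDist p q ^ 2 = (if p.1 = q.1 then (p.2.1 - q.2.1) ^ 2 else (p.2.1 + q.2.1) ^ 2)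
      + ‖p.2.2 - q.2.2‖ ^ 2 := by
  unfold obDist
  rw [Real.sq_sqrt]
  have : (0:ℝ) ≤ (if p.1 = q.1 then (p.2.1 - q.2.1) ^ 2 else (p.2.1 + q.2.1) ^ 2) := by
    split <;> positivity
  positivity

section aux

variable {K D : ℕ} (Q : Measure (Fin K × ℝ × EuclideanSpace ℝ (Fin D))) [IsProbabilityMeasure Q]

lemma int_sub (h0sq : Integrable (fun z => z.2.1 ^ 2) Q) (h0 : Integrable (fun z => z.2.1) Q)
    (x0 : ℝ) : Integrable (fun z => (x0 - z.2.1) ^ 2) Q := by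
  have : (fun z : Fin K × ℝ × EuclideanSpace ℝ (Fin D) => (x0 - z.2.1) ^ 2)
      = fun z => x0 ^ 2 - (2 * x0) * z.2.1 + z.2.1 ^ 2 := by funext z; ring
  rw [this]
  exact ((integrable_const _).sub (h0.const_mul _)).add h0sq

lemma int_add (h0sq : Integrable (fun z => z.2.1 ^ 2) Q) (h0 : Integrable (fun z => z.2.1) Q)
    (x0 : ℝ) : Integrable (fun z => (x0 + z.2.1) ^ 2) Q := by
  have : (fun z : Fin K × ℝ × EuclideanSpace ℝ (Fin D) => (x0 + z.2.1) ^ 2)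
      = fun z => x0 ^ 2 + (2 * x0) * z.2.1 + z.2.1 ^ 2 := by funext z; ring
  rw [this]
  exact ((integrable_const _).add (h0.const_mul _)).add h0sq

lemma int_norm (h1sq : Integrable (fun z => ‖z.2.2‖ ^ 2) Q)
    (h1 : Integrable (fun z => z.2.2) Q) (x : EuclideanSpace ℝ (Fin D)) :
    Integrable (fun z => ‖x - z.2.2‖ ^ 2) Q := by
  have : (fun z : Fin K × ℝ × EuclideanSpace ℝ (Fin D) => ‖x - z.2.2‖ ^ 2)
      = fun z => (‖x‖ ^ 2 - 2 * (inner ℝ x z.2.2 : ℝ)) + ‖z.2.2‖ ^ 2 := by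
    funext z
    have := @norm_sub_sq_real (EuclideanSpace ℝ (Fin D)) _ _ x z.2.2
    linarith
  rw [this]
  exact ((integrable_const _).sub ((h1.const_inner x).const_mul 2)).add h1sq

lemma expand_norm (h1sq : Integrable (fun z => ‖z.2.2‖ ^ 2) Q)
    (h1 : Integrable (fun z => z.2.2) Q) (x : EuclideanSpace ℝ (Fin D)) :
    ∫ z, ‖x - z.2.2‖ ^ 2 ∂Q
      = ‖x‖ ^ 2 - 2 * (inner ℝ x (∫ z, z.2.2 ∂Q) : ℝ) + ∫ z, ‖z.2.2‖ ^ 2 ∂Q := by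
  have heq : (fun z : Fin K × ℝ × EuclideanSpace ℝ (Fin D) => ‖x - z.2.2‖ ^ 2)
      = fun z => (‖x‖ ^ 2 - 2 * (inner ℝ x z.2.2 : ℝ)) + ‖z.2.2‖ ^ 2 := by
    funext z
    have := @norm_sub_sq_real (EuclideanSpace ℝ (Fin D)) _ _ x z.2.2
    linarith
  have hI : Integrable (fun z : Fin K × ℝ × EuclideanSpace ℝ (Fin D) =>
      ‖x‖ ^ 2 - 2 * (inner ℝ x z.2.2 : ℝ)) Q :=
    (integrable_const _).sub ((h1.const_inner x).const_mul 2)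
  rw [heq, integral_add hI h1sq]
  have hsub : ∫ z, (‖x‖ ^ 2 - 2 * (inner ℝ x z.2.2 : ℝ)) ∂Q
      = ‖x‖ ^ 2 - 2 * (inner ℝ x (∫ z, z.2.2 ∂Q) : ℝ) := by
    rw [integral_sub (integrable_const (‖x‖ ^ 2)) ((h1.const_inner x).const_mul 2),
      integral_const, integral_const_mul, integral_inner h1]
    simp
  rw [hsub]

end aux

theorem stmt6 {K D : ℕ}
    (Q : Measure (Fin K × ℝ × EuclideanSpace ℝ (Fin D))) [IsProbabilityMeasure Q]
    (hae : ∀ᵐ z ∂Q, 0 ≤ z.2.1)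
    (h0sq : Integrable (fun z => z.2.1 ^ 2) Q)
    (h0 : Integrable (fun z => z.2.1) Q)
    (h1sq : Integrable (fun z => ‖z.2.2‖ ^ 2) Q)
    (h1 : Integrable (fun z => z.2.2) Q) :
    (∀ (k : Fin K) (x0 : ℝ) (x1 : EuclideanSpace ℝ (Fin D)), 0 ≤ x0 →
      ∫ z, obDist (k, x0, x1) z ^ 2 ∂Q =
        ((∫ z in {z | z.1 = k}, (x0 - z.2.1) ^ 2 ∂Q)
          + ∫ z in {z | z.1 ≠ k}, (x0 + z.2.1) ^ 2 ∂Q)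
        + ∫ z, ‖x1 - z.2.2‖ ^ 2 ∂Q) ∧
    (∀ p : Fin K × ℝ × EuclideanSpace ℝ (Fin D), 0 ≤ p.2.1 →
      (∀ q : Fin K × ℝ × EuclideanSpace ℝ (Fin D), 0 ≤ q.2.1 →
        ∫ z, obDist p z ^ 2 ∂Q ≤ ∫ z, obDist q z ^ 2 ∂Q) →
      p.2.2 = ∫ z, z.2.2 ∂Q) := by
  have hA : ∀ k : Fin K, MeasurableSet {z : Fin K × ℝ × EuclideanSpace ℝ (Fin D) | z.1 = k} :=
    fun k => measurable_fst (measurableSet_singleton k)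
  have key : ∀ (k : Fin K) (x0 : ℝ) (x1 : EuclideanSpace ℝ (Fin D)),
      ∫ z, obDist (k, x0, x1) z ^ 2 ∂Q =
        ((∫ z in {z | z.1 = k}, (x0 - z.2.1) ^ 2 ∂Q)
          + ∫ z in {z | z.1 ≠ k}, (x0 + z.2.1) ^ 2 ∂Q)
        + ∫ z, ‖x1 - z.2.2‖ ^ 2 ∂Q := by
    intro k x0 x1
    simp_rw [obDist_sq]
    have hpw : (fun z : Fin K × ℝ × EuclideanSpace ℝ (Fin D) =>
        if (k, x0, x1).1 = z.1 then (x0 - z.2.1) ^ 2 else (x0 + z.2.1) ^ 2)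
        = Set.piecewise {z | z.1 = k} (fun z => (x0 - z.2.1) ^ 2)
            (fun z => (x0 + z.2.1) ^ 2) := by
      funext z
      by_cases h : z.1 = k <;> simp [Set.piecewise, h, eq_comm]
    have hifint : Integrable (fun z : Fin K × ℝ × EuclideanSpace ℝ (Fin D) =>
        if (k, x0, x1).1 = z.1 then (x0 - z.2.1) ^ 2 else (x0 + z.2.1) ^ 2) Q := by
      rw [hpw]
      exact Integrable.piecewise (hA k) (int_sub Q h0sq h0 x0).integrableOn
        (int_add Q h0sq h0 x0).integrableOn
    rw [integral_add hifint (int_norm Q h1sq h1 x1)]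
    congr 1
    rw [← integral_add_compl (hA k) hifint]
    congr 1
    · exact setIntegral_congr_fun (hA k) (fun z hz => by
        simp only [Set.mem_setOf_eq] at hz; simp [hz])
    · have hcompl : {z : Fin K × ℝ × EuclideanSpace ℝ (Fin D) | z.1 ≠ k}
          = {z : Fin K × ℝ × EuclideanSpace ℝ (Fin D) | z.1 = k}ᶜ := rfl
      rw [hcompl]
      exact setIntegral_congr_fun (hA k).compl (fun z hz => by
        simp only [Set.mem_compl_iff, Set.mem_setOf_eq] at hz
        simp [Ne.symm hz])
  constructor
  · exact fun k x0 x1 _ => key k x0 x1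
  · intro p hp hmin
    set μ := ∫ z, z.2.2 ∂Q with hμ
    have h := hmin (p.1, p.2.1, μ) hp
    have hp' : p = (p.1, p.2.1, p.2.2) := rfl
    rw [hp'] at h
    rw [key p.1 p.2.1 p.2.2, key p.1 p.2.1 μ] at h
    have h2 : ∫ z, ‖p.2.2 - z.2.2‖ ^ 2 ∂Q ≤ ∫ z, ‖μ - z.2.2‖ ^ 2 ∂Q := by linarith
    rw [expand_norm Q h1sq h1 p.2.2, expand_norm Q h1sq h1 μ, ← hμ] at h2
    have hinner : ‖p.2.2 - μ‖ ^ 2 ≤ 0 := by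
      have := @norm_sub_sq_real (EuclideanSpace ℝ (Fin D)) _ _ p.2.2 μ
      have hμμ : (inner ℝ μ μ : ℝ) = ‖μ‖ ^ 2 := real_inner_self_eq_norm_sq μ
      linarith
    have : ‖p.2.2 - μ‖ = 0 := by nlinarith [norm_nonneg (p.2.2 - μ)]
    have := norm_eq_zero.mp this
    exact sub_eq_zero.mp this
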